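/- Let U : ℝ → Matrix (Fin m) (Fin n) ℂ be a differentiable family of complex m×n matrices with U(t)ᴴ · U(t) = 1ₙ for all t, and set P(t) = U(t) · U(t)ᴴ. Then for all t: Tr( P′(t) · P′(t) ) = 2·Tr( (U(t)ᴴ·U′(t)) · (U(t)ᴴ·U′(t)) ) + 2·Tr( (U′(t))ᴴ · U′(t) ). (This expresses the damping factor Φ(U) = Tr(dP * dP) in terms of the connection components Uᴴ dU and the kinetic term dUᴴ dU.) -/

import Mathlib

open Matrix

/-- Entrywise derivative of a matrix-valued function of a real variable. -/
noncomputable def matDeriv {m n : ℕ} (F : ℝ → Matrix (Fin m) (Fin n) ℂ) (t : ℝ) :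
    Matrix (Fin m) (Fin n) ℂ :=
  fun i j => deriv (fun s => F s i j) t

lemma matDeriv_mul {m k n : ℕ} (F : ℝ → Matrix (Fin m) (Fin k) ℂ)
    (G : ℝ → Matrix (Fin k) (Fin n) ℂ)
    (hF : ∀ i j, Differentiable ℝ fun t => F t i j)
    (hG : ∀ i j, Differentiable ℝ fun t => G t i j) (t : ℝ) :
    matDeriv (fun s => F s * G s) t = matDeriv F t * G t + F t * matDeriv G t := by
  funext i j
  have h : HasDerivAt (fun s => (F s * G s) i j)
      ((matDeriv F t * G t + F t * matDeriv G t) i j) t := by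
    simp only [Matrix.mul_apply, Matrix.add_apply]
    rw [← Finset.sum_add_distrib]
    exact HasDerivAt.fun_sum (fun x _ =>
      (((hF i x t).hasDerivAt.mul ((hG x j) t).hasDerivAt)))
  exact h.deriv

lemma matDeriv_conjTranspose {m n : ℕ} (F : ℝ → Matrix (Fin m) (Fin n) ℂ)
    (hF : ∀ i j, Differentiable ℝ fun t => F t i j) (t : ℝ) :
    matDeriv (fun s => (F s)ᴴ) t = (matDeriv F t)ᴴ := by
  funext i j
  have h : HasDerivAt (fun s => (F s)ᴴ i j) (star (matDeriv F t j i)) t := by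
    simp only [Matrix.conjTranspose_apply]
    exact ((hF j i) t).hasDerivAt.star
  simpa [matDeriv, Matrix.conjTranspose_apply] using h.deriv

theorem damping_factor_formula {m n : ℕ}
    (U : ℝ → Matrix (Fin m) (Fin n) ℂ)
    (hU : ∀ i j, Differentiable ℝ (fun t => U t i j))
    (hunit : ∀ t : ℝ, (U t)ᴴ * U t = 1) :
    ∀ t : ℝ,
      (matDeriv (fun s => U s * (U s)ᴴ) t * matDeriv (fun s => U s * (U s)ᴴ) t).trace =
        2 * (((U t)ᴴ * matDeriv U t) * ((U t)ᴴ * matDeriv U t)).trace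
          + 2 * ((matDeriv U t)ᴴ * matDeriv U t).trace := by
  intro t
  have hUH : ∀ i j, Differentiable ℝ (fun t => (U t)ᴴ i j) := by
    intro i j
    simp only [Matrix.conjTranspose_apply]
    exact fun s => ((hU j i) s).hasDerivAt.star.differentiableAt
  set V := U t with hV
  set D := matDeriv U t with hD
  have hP : matDeriv (fun s => U s * (U s)ᴴ) t = D * Vᴴ + V * Dᴴ := by
    rw [matDeriv_mul U (fun s => (U s)ᴴ) hU hUH, matDeriv_conjTranspose U hU]
  -- constraint derivative
  have hc : Dᴴ * V + Vᴴ * D = 0 := by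
    have h1 : matDeriv (fun s => (U s)ᴴ * U s) t = Dᴴ * V + Vᴴ * D := by
      rw [matDeriv_mul (fun s => (U s)ᴴ) U hUH hU, matDeriv_conjTranspose U hU]
    have h2 : matDeriv (fun s => (U s)ᴴ * U s) t = 0 := by
      have : (fun s => (U s)ᴴ * U s) = fun _ => (1 : Matrix (Fin n) (Fin n) ℂ) := by
        funext s; exact hunit s
      rw [this]
      funext i j
      simp [matDeriv]
    rw [h1] at h2; exact h2
  have hVV : Vᴴ * V = 1 := hunit t
  have hDV : Dᴴ * V = -(Vᴴ * D) := by
    have := hc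
    linear_combination (norm := noncomm_ring) this
  rw [hP]
  have expand : (D * Vᴴ + V * Dᴴ) * (D * Vᴴ + V * Dᴴ) =
      D * Vᴴ * (D * Vᴴ) + D * Vᴴ * (V * Dᴴ) + V * Dᴴ * (D * Vᴴ) + V * Dᴴ * (V * Dᴴ) := by
    noncomm_ring
  rw [expand, Matrix.trace_add, Matrix.trace_add, Matrix.trace_add]
  have t1 : (D * Vᴴ * (D * Vᴴ)).trace = ((Vᴴ * D) * (Vᴴ * D)).trace := by
    rw [Matrix.mul_assoc, Matrix.trace_mul_comm]
    simp only [Matrix.mul_assoc]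
  have t2 : (D * Vᴴ * (V * Dᴴ)).trace = (Dᴴ * D).trace := by
    rw [show D * Vᴴ * (V * Dᴴ) = D * (Vᴴ * V) * Dᴴ by simp only [Matrix.mul_assoc], hVV,
      Matrix.mul_one, Matrix.trace_mul_comm]
  have t3 : (V * Dᴴ * (D * Vᴴ)).trace = (Dᴴ * D).trace := by
    rw [Matrix.trace_mul_comm]
    rw [show D * Vᴴ * (V * Dᴴ) = D * (Vᴴ * V) * Dᴴ by simp only [Matrix.mul_assoc], hVV,
      Matrix.mul_one, Matrix.trace_mul_comm]
  have t4 : (V * Dᴴ * (V * Dᴴ)).trace = ((Vᴴ * D) * (Vᴴ * D)).trace := by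
    rw [show V * Dᴴ * (V * Dᴴ) = V * (Dᴴ * V * Dᴴ) by simp only [Matrix.mul_assoc],
      Matrix.trace_mul_comm, show Dᴴ * V * Dᴴ * V = (Dᴴ * V) * (Dᴴ * V) by simp only [Matrix.mul_assoc],
      hDV]
    simp [Matrix.neg_mul, Matrix.mul_neg]
  rw [t1, t2, t3, t4]
  ring
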